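/- arXiv:2505.02039 — 2 statements merged into one kernel-verified Lean document; each statement's English description precedes it below -/
import Mathlib

section
/- Let ℓ₁, ℓ₂ > 0, set L = ℓ₁ + ℓ₂, let μ > 0 with ω = √μ satisfying cos(ω·ℓ₁) ≠ 0 and cos(ω·ℓ₂) ≠ 0, and let t ∈ ℝ. There exist functions f₁ (twice differentiable on [0,ℓ₁]) and f₂ (twice differentiable on [ℓ₁,L]), not both identically zero, satisfying: f₁'' = −μ·f₁ on [0,ℓ₁], f₂'' = −μ·f₂ on [ℓ₁,L], the Neumann conditions f₁'(0) = 0 and f₂'(L) = 0, the continuity condition f₁(ℓ₁) = f₂(ℓ₁), and the jump condition f₂'(ℓ₁) − f₁'(ℓ₁) = t·f₁(ℓ₁), if and only if ω·( tan(ω·ℓ₁) + tan(ω·ℓ₂) ) = t. -/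
open Set

lemma const_on (a b : ℝ) (g : ℝ → ℝ) (hg : ∀ x ∈ Icc a b, HasDerivAt g 0 x) :
    ∀ x ∈ Icc a b, g x = g a := by
  apply constant_of_has_deriv_right_zero
  · exact fun x hx => ((hg x hx).continuousAt).continuousWithinAt
  · exact fun x hx => ((hg x (Ico_subset_Icc_self hx)).hasDerivWithinAt)

lemma wronsk (μ a b : ℝ) (f u u' : ℝ → ℝ)
    (hf : ∀ x ∈ Icc a b, DifferentiableAt ℝ f x)
    (hf' : ∀ x ∈ Icc a b, DifferentiableAt ℝ (deriv f) x)
    (hf'' : ∀ x ∈ Icc a b, deriv (deriv f) x = -μ * f x)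
    (hu : ∀ x, HasDerivAt u (u' x) x)
    (hu' : ∀ x, HasDerivAt u' (-μ * u x) x) :
    ∀ x ∈ Icc a b, deriv f x * u x - f x * u' x = deriv f a * u a - f a * u' a := by
  apply const_on
  intro x hx
  have h1 := ((hf' x hx).hasDerivAt.mul (hu x)).sub (((hf x hx).hasDerivAt).mul (hu' x))
  have : deriv (deriv f) x * u x + deriv f x * u' x -
      (deriv f x * u' x + f x * (-μ * u x)) = 0 := by
    rw [hf'' x hx]; ring
  rwa [this] at h1

lemma energy (μ a b : ℝ) (f : ℝ → ℝ)
    (hf : ∀ x ∈ Icc a b, DifferentiableAt ℝ f x)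
    (hf' : ∀ x ∈ Icc a b, DifferentiableAt ℝ (deriv f) x)
    (hf'' : ∀ x ∈ Icc a b, deriv (deriv f) x = -μ * f x) :
    ∀ x ∈ Icc a b, deriv f x ^ 2 + μ * f x ^ 2 = deriv f a ^ 2 + μ * f a ^ 2 := by
  apply const_on
  intro x hx
  have h1 := ((hf' x hx).hasDerivAt.mul (hf' x hx).hasDerivAt).add
    (((hf x hx).hasDerivAt.mul (hf x hx).hasDerivAt).const_mul μ)
  have heq : deriv (deriv f) x * deriv f x + deriv f x * deriv (deriv f) x +
      μ * (deriv f x * f x + f x * deriv f x) = 0 := by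
    rw [hf'' x hx]; ring
  rw [heq] at h1
  have : (fun x => deriv f x ^ 2 + μ * f x ^ 2)
      = fun x => deriv f x * deriv f x + μ * (f x * f x) := by
    funext y; ring
  rw [this]
  exact h1

/-- On the interval [0, ℓ₁+ℓ₂] with a δ(t) vertex at ℓ₁ and Neumann
conditions at both ends, μ = ω² (with cos(ωℓᵢ) ≠ 0) is an eigenvalue iff
ω·(tan(ωℓ₁) + tan(ωℓ₂)) = t. -/
theorem stmt_14 (ℓ₁ ℓ₂ μ ω t : ℝ) (h1 : 0 < ℓ₁) (h2 : 0 < ℓ₂) (hμ : 0 < μ)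
    (hω : ω = Real.sqrt μ)
    (hc1 : Real.cos (ω * ℓ₁) ≠ 0) (hc2 : Real.cos (ω * ℓ₂) ≠ 0) :
    (∃ f₁ f₂ : ℝ → ℝ,
      (∀ x ∈ Set.Icc (0:ℝ) ℓ₁, DifferentiableAt ℝ f₁ x) ∧
      (∀ x ∈ Set.Icc (0:ℝ) ℓ₁, DifferentiableAt ℝ (deriv f₁) x) ∧
      (∀ x ∈ Set.Icc (0:ℝ) ℓ₁, deriv (deriv f₁) x = -μ * f₁ x) ∧
      (∀ x ∈ Set.Icc ℓ₁ (ℓ₁ + ℓ₂), DifferentiableAt ℝ f₂ x) ∧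
      (∀ x ∈ Set.Icc ℓ₁ (ℓ₁ + ℓ₂), DifferentiableAt ℝ (deriv f₂) x) ∧
      (∀ x ∈ Set.Icc ℓ₁ (ℓ₁ + ℓ₂), deriv (deriv f₂) x = -μ * f₂ x) ∧
      deriv f₁ 0 = 0 ∧ deriv f₂ (ℓ₁ + ℓ₂) = 0 ∧
      f₁ ℓ₁ = f₂ ℓ₁ ∧
      deriv f₂ ℓ₁ - deriv f₁ ℓ₁ = t * f₁ ℓ₁ ∧
      ¬((∀ x ∈ Set.Icc (0:ℝ) ℓ₁, f₁ x = 0) ∧ (∀ x ∈ Set.Icc ℓ₁ (ℓ₁ + ℓ₂), f₂ x = 0))) ↔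
    ω * (Real.tan (ω * ℓ₁) + Real.tan (ω * ℓ₂)) = t := by
  have hω2 : ω ^ 2 = μ := by rw [hω, Real.sq_sqrt hμ.le]
  have hωpos : 0 < ω := hω ▸ Real.sqrt_pos.mpr hμ
  set L := ℓ₁ + ℓ₂ with hL
  -- derivative facts for u₁ x = cos (ω x)
  have hu1 : ∀ x : ℝ, HasDerivAt (fun y => Real.cos (ω * y)) (-ω * Real.sin (ω * x)) x := by
    intro x
    have h := ((Real.hasDerivAt_cos (ω * x)).comp x ((hasDerivAt_id x).const_mul ω))
    exact h.congr_deriv (by ring)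
  have hu1' : ∀ x : ℝ, HasDerivAt (fun y => -ω * Real.sin (ω * y))
      (-μ * Real.cos (ω * x)) x := by
    intro x
    have h := (((Real.hasDerivAt_sin (ω * x)).comp x
      ((hasDerivAt_id x).const_mul ω)).const_mul (-ω))
    refine h.congr_deriv ?_
    rw [← hω2]; ring
  -- derivative facts for u₂ x = cos (ω (L - x))
  have hu2 : ∀ x : ℝ, HasDerivAt (fun y => Real.cos (ω * (L - y)))
      (ω * Real.sin (ω * (L - x))) x := by
    intro x
    have hinner : HasDerivAt (fun y : ℝ => ω * (L - y)) (-ω) x := by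
      simpa using ((hasDerivAt_id x).const_sub L).const_mul ω
    have h := (Real.hasDerivAt_cos (ω * (L - x))).comp x hinner
    exact h.congr_deriv (by ring)
  have hu2' : ∀ x : ℝ, HasDerivAt (fun y => ω * Real.sin (ω * (L - y)))
      (-μ * Real.cos (ω * (L - x))) x := by
    intro x
    have hinner : HasDerivAt (fun y : ℝ => ω * (L - y)) (-ω) x := by
      simpa using ((hasDerivAt_id x).const_sub L).const_mul ω
    have h := (((Real.hasDerivAt_sin (ω * (L - x))).comp x hinner).const_mul ω)
    refine h.congr_deriv ?_
    rw [← hω2]; ring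
  constructor
  · rintro ⟨f₁, f₂, hd1, hd1', hode1, hd2, hd2', hode2, hN0, hNL, hcont, hjump, hnz⟩
    have hmem1 : ℓ₁ ∈ Icc (0:ℝ) ℓ₁ := ⟨h1.le, le_refl _⟩
    have hmemL : L ∈ Icc ℓ₁ L := ⟨by linarith, le_refl _⟩
    have W1 := wronsk μ 0 ℓ₁ f₁ _ _ hd1 hd1' hode1 hu1 hu1' ℓ₁ hmem1
    have W2 := wronsk μ ℓ₁ L f₂ _ _ hd2 hd2' hode2 hu2 hu2' L hmemL
    simp only [mul_zero, Real.cos_zero, Real.sin_zero, hN0, sub_self, mul_one] at W1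
    have hLl : L - ℓ₁ = ℓ₂ := by rw [hL]; ring
    rw [sub_self, mul_zero, Real.cos_zero, Real.sin_zero, mul_one, mul_zero, mul_zero,
      hNL, hLl] at W2
    -- W1 : deriv f₁ ℓ₁ * cos(ωℓ₁) - f₁ ℓ₁ * (-ω sin(ωℓ₁)) = 0
    -- W2 : 0 = deriv f₂ ℓ₁ * cos(ωℓ₂) - f₂ ℓ₁ * (ω sin(ωℓ₂))
    have hV : f₁ ℓ₁ ≠ 0 := by
      intro hV0
      apply hnz
      have hd1l : deriv f₁ ℓ₁ = 0 := by
        have hmul : deriv f₁ ℓ₁ * Real.cos (ω * ℓ₁) = 0 := by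
          rw [hV0] at W1; linarith [W1]
        rcases mul_eq_zero.mp hmul with h | h
        · exact h
        · exact absurd h hc1
      have hf2l : f₂ ℓ₁ = 0 := hcont ▸ hV0
      have hd2l : deriv f₂ ℓ₁ = 0 := by
        have hmul : deriv f₂ ℓ₁ * Real.cos (ω * ℓ₂) = 0 := by
          rw [hf2l] at W2; linarith [W2]
        rcases mul_eq_zero.mp hmul with h | h
        · exact h
        · exact absurd h hc2
      constructor
      · intro x hx
        have E := energy μ 0 ℓ₁ f₁ hd1 hd1' hode1
        have E0 : deriv f₁ 0 ^ 2 + μ * f₁ 0 ^ 2 = 0 := by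
          have := E ℓ₁ hmem1
          rw [hd1l, hV0] at this
          nlinarith [sq_nonneg (deriv f₁ 0), sq_nonneg (f₁ 0)]
        have Ex := E x hx
        rw [E0] at Ex
        by_contra h
        have hpos : 0 < f₁ x ^ 2 := (sq_nonneg _).lt_of_ne (Ne.symm (pow_ne_zero 2 h))
        nlinarith [sq_nonneg (deriv f₁ x), mul_pos hμ hpos]
      · intro x hx
        have E := energy μ ℓ₁ L f₂ hd2 hd2' hode2
        have Ex := E x hx
        rw [hd2l, hf2l] at Ex
        by_contra h
        have hpos : 0 < f₂ x ^ 2 := (sq_nonneg _).lt_of_ne (Ne.symm (pow_ne_zero 2 h))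
        nlinarith [sq_nonneg (deriv f₂ x), mul_pos hμ hpos]
    rw [Real.tan_eq_sin_div_cos, Real.tan_eq_sin_div_cos]
    have key : f₁ ℓ₁ * (ω * (Real.sin (ω * ℓ₁) * Real.cos (ω * ℓ₂)
        + Real.sin (ω * ℓ₂) * Real.cos (ω * ℓ₁)))
        = f₁ ℓ₁ * (t * (Real.cos (ω * ℓ₁) * Real.cos (ω * ℓ₂))) := by
      rw [← hcont] at W2
      linear_combination Real.cos (ω * ℓ₂) * W1 + Real.cos (ω * ℓ₁) * W2 +
        (Real.cos (ω * ℓ₁) * Real.cos (ω * ℓ₂)) * hjump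
    have key2 := mul_left_cancel₀ hV key
    field_simp
    linarith [key2]
  · intro ht
    refine ⟨fun x => Real.cos (ω * x),
      fun x => (Real.cos (ω * ℓ₁) / Real.cos (ω * ℓ₂)) * Real.cos (ω * (L - x)), ?_⟩
    set c := Real.cos (ω * ℓ₁) / Real.cos (ω * ℓ₂) with hc
    have hdf1 : deriv (fun y => Real.cos (ω * y)) = fun x => -ω * Real.sin (ω * x) :=
      funext fun x => (hu1 x).deriv
    have hdf1' : deriv (fun x => -ω * Real.sin (ω * x)) = fun x => -μ * Real.cos (ω * x) :=
      funext fun x => (hu1' x).deriv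
    have hdf2 : deriv (fun x => c * Real.cos (ω * (L - x)))
        = fun x => c * (ω * Real.sin (ω * (L - x))) :=
      funext fun x => ((hu2 x).const_mul c).deriv
    have hdf2' : deriv (fun x => c * (ω * Real.sin (ω * (L - x))))
        = fun x => c * (-μ * Real.cos (ω * (L - x))) :=
      funext fun x => ((hu2' x).const_mul c).deriv
    have hLl : L - ℓ₁ = ℓ₂ := by rw [hL]; ring
    refine ⟨fun x _ => (hu1 x).differentiableAt, ?_, ?_, ?_, ?_, ?_, ?_, ?_, ?_, ?_, ?_⟩
    · rw [hdf1]; exact fun x _ => (hu1' x).differentiableAt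
    · intro x _; rw [hdf1, hdf1']
    · exact fun x _ => ((hu2 x).const_mul c).differentiableAt
    · rw [hdf2]; exact fun x _ => ((hu2' x).const_mul c).differentiableAt
    · intro x _; rw [hdf2, hdf2']; ring
    · rw [hdf1]; simp
    · rw [hdf2]; simp
    · simp only [hLl]
      rw [hc]
      field_simp
    · simp only [hdf1, hdf2, hLl]
      rw [hc]
      rw [Real.tan_eq_sin_div_cos, Real.tan_eq_sin_div_cos] at ht
      field_simp
      field_simp at ht
      linarith [ht]
    · rintro ⟨hz1, _⟩
      have := hz1 0 ⟨le_refl _, h1.le⟩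
      simp at this
end

section
/- Let ℓ > 0, t ∈ ℝ, and let n ≥ 1 be an integer. Then there exists exactly one k in the open interval ((2n−1)·π/(2ℓ), (2n+1)·π/(2ℓ)) satisfying k·sin(k·ℓ) = t·cos(k·ℓ). -/
open Real Set

private lemma stmt15_cos_ne (ℓ : ℝ) (hℓ : 0 < ℓ) (n : ℤ) {k : ℝ}
    (hk : k ∈ Set.Ioo ((2 * (n : ℝ) - 1) * Real.pi / (2 * ℓ))
          ((2 * (n : ℝ) + 1) * Real.pi / (2 * ℓ))) :
    Real.cos (k * ℓ) ≠ 0 := by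
  obtain ⟨h1, h2⟩ := hk
  intro hc
  obtain ⟨m, hm⟩ := Real.cos_eq_zero_iff.1 hc
  have hπ := Real.pi_pos
  have hl : (2 * (n : ℝ) - 1) * Real.pi / 2 < k * ℓ := by
    have e1 : (2 * (n : ℝ) - 1) * Real.pi / (2 * ℓ) * ℓ = (2 * (n : ℝ) - 1) * Real.pi / 2 := by
      field_simp
    calc (2 * (n : ℝ) - 1) * Real.pi / 2
        = (2 * (n : ℝ) - 1) * Real.pi / (2 * ℓ) * ℓ := e1.symm
      _ < k * ℓ := mul_lt_mul_of_pos_right h1 hℓ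
  have hr : k * ℓ < (2 * (n : ℝ) + 1) * Real.pi / 2 := by
    have e2 : (2 * (n : ℝ) + 1) * Real.pi / (2 * ℓ) * ℓ = (2 * (n : ℝ) + 1) * Real.pi / 2 := by
      field_simp
    calc k * ℓ < (2 * (n : ℝ) + 1) * Real.pi / (2 * ℓ) * ℓ := mul_lt_mul_of_pos_right h2 hℓ
      _ = (2 * (n : ℝ) + 1) * Real.pi / 2 := e2
  rw [hm] at hl hr
  have i1 : (2 * (n : ℝ) - 1) < 2 * (m : ℝ) + 1 := by
    have := (div_lt_div_iff_of_pos_right (by linarith : (0:ℝ) < 2)).1 hl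
    exact lt_of_mul_lt_mul_right this (le_of_lt hπ)
  have i2 : (2 * (m : ℝ) + 1) < 2 * (n : ℝ) + 1 := by
    have := (div_lt_div_iff_of_pos_right (by linarith : (0:ℝ) < 2)).1 hr
    exact lt_of_mul_lt_mul_right this (le_of_lt hπ)
  have j1 : (2 * n - 1 : ℤ) < 2 * m + 1 := by exact_mod_cast i1
  have j2 : (2 * m + 1 : ℤ) < 2 * n + 1 := by exact_mod_cast i2
  omega

private lemma stmt15_cont (ℓ : ℝ) {x : ℝ} (hc : Real.cos (x * ℓ) ≠ 0) :
    ContinuousAt (fun k : ℝ => k * Real.tan (k * ℓ)) x := by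
  have hinner : ContinuousAt (fun k : ℝ => k * ℓ) x := continuousAt_id.mul continuousAt_const
  have houter : ContinuousAt Real.tan (x * ℓ) := Real.continuousAt_tan.2 hc
  have htan : ContinuousAt (fun k : ℝ => Real.tan (k * ℓ)) x :=
    ContinuousAt.comp (f := fun k : ℝ => k * ℓ) (x := x) houter hinner
  exact continuousAt_id.mul htan

private lemma stmt15_mono (ℓ : ℝ) (hℓ : 0 < ℓ) (n : ℤ) (hn : 1 ≤ n) :
    StrictMonoOn (fun k => k * Real.tan (k * ℓ))
      (Set.Ioo ((2 * (n : ℝ) - 1) * Real.pi / (2 * ℓ))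
        ((2 * (n : ℝ) + 1) * Real.pi / (2 * ℓ))) := by
  have hπ := Real.pi_pos
  apply strictMonoOn_of_hasDerivWithinAt_pos (convex_Ioo _ _)
      (f' := fun k => 1 * Real.tan (k * ℓ) + k * (1 / Real.cos (k * ℓ) ^ 2 * ℓ))
  · intro x hx
    exact (stmt15_cont ℓ (stmt15_cos_ne ℓ hℓ n hx)).continuousWithinAt
  · intro x hx
    rw [interior_Ioo] at hx
    have hc := stmt15_cos_ne ℓ hℓ n hx
    have hd : HasDerivAt (fun k => k * Real.tan (k * ℓ))
        (1 * Real.tan (x * ℓ) + x * (1 / Real.cos (x * ℓ) ^ 2 * ℓ)) x :=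
      (hasDerivAt_id x).mul ((Real.hasDerivAt_tan hc).comp x (hasDerivAt_mul_const ℓ) :
        HasDerivAt (Real.tan ∘ fun k : ℝ => k * ℓ) _ x)
    exact hd.hasDerivWithinAt
  · intro x hx
    rw [interior_Ioo] at hx
    have hc := stmt15_cos_ne ℓ hℓ n hx
    have hn' : (1 : ℝ) ≤ (n : ℝ) := by exact_mod_cast hn
    have hxl : Real.pi / 2 < x * ℓ := by
      have e1 : (2 * (n : ℝ) - 1) * Real.pi / (2 * ℓ) * ℓ = (2 * (n : ℝ) - 1) * Real.pi / 2 := by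
        field_simp
      have h1 : (2 * (n : ℝ) - 1) * Real.pi / 2 < x * ℓ := by
        calc (2 * (n : ℝ) - 1) * Real.pi / 2
            = (2 * (n : ℝ) - 1) * Real.pi / (2 * ℓ) * ℓ := e1.symm
          _ < x * ℓ := mul_lt_mul_of_pos_right hx.1 hℓ
      nlinarith
    have key : 0 < Real.sin (x * ℓ) * Real.cos (x * ℓ) + x * ℓ := by
      have h1 := Real.neg_one_le_sin (2 * (x * ℓ))
      have h2 := Real.sin_two_mul (x * ℓ)
      nlinarith [Real.pi_gt_three]
    have heq : 1 * Real.tan (x * ℓ) + x * (1 / Real.cos (x * ℓ) ^ 2 * ℓ)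
        = (Real.sin (x * ℓ) * Real.cos (x * ℓ) + x * ℓ) / Real.cos (x * ℓ) ^ 2 := by
      rw [Real.tan_eq_sin_div_cos]
      field_simp
    rw [heq]
    exact div_pos key (pow_two_pos_of_ne_zero hc)

private lemma stmt15_exists (ℓ t : ℝ) (hℓ : 0 < ℓ) (n : ℤ) (hn : 1 ≤ n) :
    ∃ k ∈ Set.Ioo ((2 * (n : ℝ) - 1) * Real.pi / (2 * ℓ))
        ((2 * (n : ℝ) + 1) * Real.pi / (2 * ℓ)),
      k * Real.tan (k * ℓ) = t := by
  have hπ := Real.pi_pos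
  have hn' : (1 : ℝ) ≤ (n : ℝ) := by exact_mod_cast hn
  obtain ⟨s, hs⟩ : ∃ x : ℝ, x = |t| * (2 * ℓ) / Real.pi + 1 := ⟨_, rfl⟩
  have hs0 : 0 < s := by rw [hs]; positivity
  obtain ⟨k₁, hk₁⟩ : ∃ x : ℝ, x = (Real.arctan (-s) + n * Real.pi) / ℓ := ⟨_, rfl⟩
  obtain ⟨k₂, hk₂⟩ : ∃ x : ℝ, x = (Real.arctan s + n * Real.pi) / ℓ := ⟨_, rfl⟩
  have hb1 : -(Real.pi / 2) < Real.arctan (-s) := Real.neg_pi_div_two_lt_arctan _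
  have hb2 : Real.arctan (-s) < Real.pi / 2 := Real.arctan_lt_pi_div_two _
  have hb3 : -(Real.pi / 2) < Real.arctan s := Real.neg_pi_div_two_lt_arctan _
  have hb4 : Real.arctan s < Real.pi / 2 := Real.arctan_lt_pi_div_two _
  have ea : (2 * (n : ℝ) - 1) * Real.pi / (2 * ℓ) = (-(Real.pi / 2) + n * Real.pi) / ℓ := by
    field_simp; ring
  have eb : (2 * (n : ℝ) + 1) * Real.pi / (2 * ℓ) = (Real.pi / 2 + n * Real.pi) / ℓ := by
    field_simp; ring
  have hk1mem : k₁ ∈ Set.Ioo ((2 * (n : ℝ) - 1) * Real.pi / (2 * ℓ))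
      ((2 * (n : ℝ) + 1) * Real.pi / (2 * ℓ)) := by
    rw [ea, eb, hk₁]
    exact ⟨(div_lt_div_iff_of_pos_right hℓ).2 (by linarith),
      (div_lt_div_iff_of_pos_right hℓ).2 (by linarith)⟩
  have hk2mem : k₂ ∈ Set.Ioo ((2 * (n : ℝ) - 1) * Real.pi / (2 * ℓ))
      ((2 * (n : ℝ) + 1) * Real.pi / (2 * ℓ)) := by
    rw [ea, eb, hk₂]
    exact ⟨(div_lt_div_iff_of_pos_right hℓ).2 (by linarith),
      (div_lt_div_iff_of_pos_right hℓ).2 (by linarith)⟩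
  have hk12 : k₁ < k₂ := by
    rw [hk₁, hk₂]
    apply (div_lt_div_iff_of_pos_right hℓ).2
    have := Real.arctan_strictMono (show -s < s by linarith)
    linarith
  have ha_ge : Real.pi / (2 * ℓ) ≤ (2 * (n : ℝ) - 1) * Real.pi / (2 * ℓ) := by
    rw [div_le_div_iff_of_pos_right (by positivity)]
    nlinarith
  have hk1pos : Real.pi / (2 * ℓ) < k₁ := lt_of_le_of_lt ha_ge hk1mem.1
  have hk2pos : Real.pi / (2 * ℓ) < k₂ := lt_of_le_of_lt ha_ge hk2mem.1
  have e1 : k₁ * ℓ = Real.arctan (-s) + n * Real.pi := by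
    rw [hk₁]; field_simp
  have e2 : k₂ * ℓ = Real.arctan s + n * Real.pi := by
    rw [hk₂]; field_simp
  have hf1 : k₁ * Real.tan (k₁ * ℓ) = k₁ * (-s) := by
    rw [e1, Real.tan_add_int_mul_pi, Real.tan_arctan]
  have hf2 : k₂ * Real.tan (k₂ * ℓ) = k₂ * s := by
    rw [e2, Real.tan_add_int_mul_pi, Real.tan_arctan]
  have hcalc : Real.pi / (2 * ℓ) * s = |t| + Real.pi / (2 * ℓ) := by
    rw [hs]; field_simp
  have habs : -|t| ≤ t := neg_abs_le t
  have habs' : t ≤ |t| := le_abs_self t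
  have hple : (0:ℝ) < Real.pi / (2 * ℓ) := by positivity
  have hle1 : k₁ * Real.tan (k₁ * ℓ) ≤ t := by
    rw [hf1]
    have h1 : k₁ * (-s) < Real.pi / (2 * ℓ) * (-s) :=
      mul_lt_mul_of_neg_right hk1pos (by linarith)
    have h2 : Real.pi / (2 * ℓ) * (-s) = -(|t| + Real.pi / (2 * ℓ)) := by
      rw [mul_neg, hcalc]
    linarith
  have hle2 : t ≤ k₂ * Real.tan (k₂ * ℓ) := by
    rw [hf2]
    have h1 : Real.pi / (2 * ℓ) * s < k₂ * s := mul_lt_mul_of_pos_right hk2pos hs0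
    linarith
  have hsub : Set.Icc k₁ k₂ ⊆ Set.Ioo ((2 * (n : ℝ) - 1) * Real.pi / (2 * ℓ))
      ((2 * (n : ℝ) + 1) * Real.pi / (2 * ℓ)) :=
    Set.Icc_subset_Ioo hk1mem.1 hk2mem.2
  have hcont : ContinuousOn (fun k => k * Real.tan (k * ℓ)) (Set.Icc k₁ k₂) := fun x hx =>
    (stmt15_cont ℓ (stmt15_cos_ne ℓ hℓ n (hsub hx))).continuousWithinAt
  obtain ⟨k, hkIcc, hfk⟩ := intermediate_value_Icc (le_of_lt hk12) hcont ⟨hle1, hle2⟩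
  exact ⟨k, hsub hkIcc, hfk⟩

/-- For each ℓ > 0, t ∈ ℝ, and integer n ≥ 1, there is exactly one
k ∈ ((2n-1)π/(2ℓ), (2n+1)π/(2ℓ)) with k·sin(kℓ) = t·cos(kℓ). -/
theorem stmt_15 (ℓ t : ℝ) (hℓ : 0 < ℓ) (n : ℤ) (hn : 1 ≤ n) :
    ∃! k : ℝ,
      k ∈ Set.Ioo ((2 * (n : ℝ) - 1) * Real.pi / (2 * ℓ)) ((2 * (n : ℝ) + 1) * Real.pi / (2 * ℓ)) ∧
      k * Real.sin (k * ℓ) = t * Real.cos (k * ℓ) := by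
  obtain ⟨k, hk, hfk⟩ := stmt15_exists ℓ t hℓ n hn
  have hc := stmt15_cos_ne ℓ hℓ n hk
  refine ⟨k, ⟨hk, ?_⟩, ?_⟩
  · rw [Real.tan_eq_sin_div_cos] at hfk
    field_simp at hfk
    linear_combination hfk
  · rintro k' ⟨hk', heq'⟩
    have hc' := stmt15_cos_ne ℓ hℓ n hk'
    have hfk' : k' * Real.tan (k' * ℓ) = t := by
      rw [Real.tan_eq_sin_div_cos]
      field_simp
      linear_combination heq'
    exact (stmt15_mono ℓ hℓ n hn).injOn hk' hk (by rw [hfk', hfk])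
end
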